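/- arXiv:1906.09674 — 6 statements merged into one kernel-verified Lean document; each statement's English description precedes it below -/
import Mathlib

section
/- Let m ≥ 2 and λ_1, …, λ_m ∈ ℝ, and set λ_min = min_{i≠j} (λ_j − λ_i). If λ_min ≥ log(m^{1/(m−1)} − 1), then ∑_{i=1}^{m} ∏_{j≠i} 1/(1 + e^{λ_j − λ_i}) ≤ m·(1/(1+e^{λ_min}))^{m−1} ≤ 1. Consequently, setting π(a_i|s) = ∏_{j≠i} 1/(1+e^{λ_j−λ_i}) for i = 1,…,m and assigning a dummy action a' the probability π(a'|s) = 1 − ∑_{i=1}^m π(a_i|s) ≥ 0 yields a valid probability distribution over the augmented action set of size m+1. -/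
open Finset

/-- if `λ_min = min_{i≠j}(λ_j − λ_i) ≥ log(m^{1/(m−1)} − 1)` then
`∑_i ∏_{j≠i} 1/(1+e^{λ_j−λ_i}) ≤ m·(1/(1+e^{λ_min}))^{m−1} ≤ 1`, so the pairwise
ranking policy plus a dummy action (with the leftover mass, which is `≥ 0`)
forms a valid probability distribution. -/
theorem stmt_6 (m : ℕ) (hm : 2 ≤ m) (lam : Fin m → ℝ)
    (hne : (Finset.univ.offDiag : Finset (Fin m × Fin m)).Nonempty)
    (lamMin : ℝ)
    (hdef : lamMin =
      (Finset.univ.offDiag : Finset (Fin m × Fin m)).inf' hne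
        (fun ij => lam ij.2 - lam ij.1))
    (hcond : Real.log ((m : ℝ) ^ ((1 : ℝ) / ((m : ℝ) - 1)) - 1) ≤ lamMin) :
    (∑ i : Fin m, ∏ j ∈ Finset.univ.erase i, 1 / (1 + Real.exp (lam j - lam i)))
        ≤ (m : ℝ) * (1 / (1 + Real.exp lamMin)) ^ (m - 1) ∧
    (m : ℝ) * (1 / (1 + Real.exp lamMin)) ^ (m - 1) ≤ 1 ∧
    0 ≤ 1 - ∑ i : Fin m, ∏ j ∈ Finset.univ.erase i,
        1 / (1 + Real.exp (lam j - lam i)) := by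
  have ht0 : (0 : ℝ) < 1 + Real.exp lamMin := by positivity
  set t : ℝ := 1 + Real.exp lamMin with ht
  -- key pointwise bound
  have hkey : ∀ i j : Fin m, j ≠ i →
      1 / (1 + Real.exp (lam j - lam i)) ≤ 1 / t := by
    intro i j hji
    have hmem : (i, j) ∈ (Finset.univ.offDiag : Finset (Fin m × Fin m)) := by
      simp [Finset.mem_offDiag, Ne.symm hji]
    have hle : lamMin ≤ lam j - lam i := by
      rw [hdef]; exact Finset.inf'_le _ hmem
    have : t ≤ 1 + Real.exp (lam j - lam i) := by
      have := Real.exp_le_exp.2 hle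
      linarith
    exact one_div_le_one_div_of_le ht0 this
  -- first inequality
  have h1 : (∑ i : Fin m, ∏ j ∈ Finset.univ.erase i,
      1 / (1 + Real.exp (lam j - lam i)))
      ≤ (m : ℝ) * (1 / t) ^ (m - 1) := by
    have hprod : ∀ i : Fin m, (∏ j ∈ Finset.univ.erase i,
        1 / (1 + Real.exp (lam j - lam i))) ≤ (1 / t) ^ (m - 1) := by
      intro i
      have hcard : (Finset.univ.erase i).card = m - 1 := by
        simp [Finset.card_erase_of_mem]
      calc (∏ j ∈ Finset.univ.erase i, 1 / (1 + Real.exp (lam j - lam i)))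
          ≤ ∏ j ∈ Finset.univ.erase i, 1 / t := by
            apply Finset.prod_le_prod
            · intro j _; positivity
            · intro j hj
              exact hkey i j (Finset.ne_of_mem_erase hj)
        _ = (1 / t) ^ (m - 1) := by rw [Finset.prod_const, hcard]
    calc (∑ i : Fin m, ∏ j ∈ Finset.univ.erase i,
          1 / (1 + Real.exp (lam j - lam i)))
        ≤ ∑ _i : Fin m, (1 / t) ^ (m - 1) := Finset.sum_le_sum fun i _ => hprod i
      _ = (m : ℝ) * (1 / t) ^ (m - 1) := by
          rw [Finset.sum_const, Finset.card_univ, Fintype.card_fin, nsmul_eq_mul]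
  -- second inequality
  have hm1 : (1 : ℝ) < (m : ℝ) := by exact_mod_cast lt_of_lt_of_le one_lt_two (by exact_mod_cast hm)
  have hmr : (0 : ℝ) < (m : ℝ) - 1 := by linarith
  have hrpow1 : (1 : ℝ) < (m : ℝ) ^ ((1 : ℝ) / ((m : ℝ) - 1)) := by
    apply Real.one_lt_rpow_iff_of_pos (by linarith) |>.2
    exact Or.inl ⟨hm1, by positivity⟩
  have hexp : (m : ℝ) ^ ((1 : ℝ) / ((m : ℝ) - 1)) - 1 ≤ Real.exp lamMin := by
    have := Real.exp_le_exp.2 hcond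
    rwa [Real.exp_log (by linarith)] at this
  have htm : (m : ℝ) ^ ((1 : ℝ) / ((m : ℝ) - 1)) ≤ t := by
    rw [ht]; linarith
  have hcast : ((m - 1 : ℕ) : ℝ) = (m : ℝ) - 1 := by
    have : (1 : ℕ) ≤ m := le_trans one_le_two hm
    push_cast [Nat.cast_sub this]; ring
  have hpow : (m : ℝ) ≤ t ^ (m - 1) := by
    have h1 : ((m : ℝ) ^ ((1 : ℝ) / ((m : ℝ) - 1))) ^ (m - 1) ≤ t ^ (m - 1) := by
      apply pow_le_pow_left₀ (by positivity) htm
    have h2 : ((m : ℝ) ^ ((1 : ℝ) / ((m : ℝ) - 1))) ^ (m - 1) = (m : ℝ) := by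
      rw [← Real.rpow_natCast ((m : ℝ) ^ ((1 : ℝ) / ((m : ℝ) - 1))) (m - 1),
        ← Real.rpow_mul (by positivity), hcast, one_div,
        inv_mul_cancel₀ (ne_of_gt hmr), Real.rpow_one]
    linarith
  have h2 : (m : ℝ) * (1 / t) ^ (m - 1) ≤ 1 := by
    rw [one_div, inv_pow, ← div_eq_mul_inv, div_le_one (by positivity)]
    exact hpow
  exact ⟨h1, h2, by linarith⟩
end

section
/- Let S, A be finite sets, T ≥ 1, and let 𝒯 be a nonempty finite set of trajectories of horizon T with dynamics probabilities p_d(τ) = p₀(s_1)·∏_{t=1}^{T-1}P(s_{t+1}|s_t,a_t) > 0 for all τ ∈ 𝒯, and a policy π with 0 < π(a_t|s_t) ≤ 1 for every τ ∈ 𝒯 and every t. Let p_θ(τ) = p_d(τ)·∏_{t=1}^{T}π(a_t|s_t) and let p*(s,a) = (1/(|𝒯|·T))·∑_{τ∈𝒯}|{t : (s_t,a_t)=(s,a)}| be the empirical state-action distribution of 𝒯. Then ∑_{τ∈𝒯} p_θ(τ) ≥ |𝒯|·(∏_{τ∈𝒯} p_d(τ))^{1/|𝒯|}·exp(T·L),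 where L = ∑_{(s,a)} p*(s,a)·log π(a|s) (terms with p*(s,a)=0 taken to be 0). -/
open Finset

/-- Dynamics probability of a trajectory of horizon `T`:
`p_d(τ) = p₀(s₁) · ∏_{t=1}^{T-1} P(s_{t+1} | s_t, a_t)`. -/
noncomputable def dynProb {S A : Type*} (p₀ : S → ℝ) (P : S × A → S → ℝ) (T : ℕ)
    (τ : ℕ → S × A) : ℝ :=
  p₀ (τ 0).1 * ∏ t ∈ Finset.range (T - 1), P (τ t) (τ (t + 1)).1

/-- Trajectory probability: `p_θ(τ) = p_d(τ) · ∏_{t=1}^{T} π(a_t|s_t)`. -/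
noncomputable def trajProb {S A : Type*} (p₀ : S → ℝ) (P : S × A → S → ℝ)
    (π : S × A → ℝ) (T : ℕ) (τ : ℕ → S × A) : ℝ :=
  dynProb p₀ P T τ * ∏ t ∈ Finset.range T, π (τ t)

/-- Empirical state-action distribution of a finite set of trajectories:
`p*(s,a) = (1/(|𝒯|·T)) ∑_{τ∈𝒯} |{t < T : (s_t,a_t) = (s,a)}|`. -/
noncomputable def empDist {S A : Type*} [DecidableEq S] [DecidableEq A]
    (𝒯 : Finset (ℕ → S × A)) (T : ℕ) (sa : S × A) : ℝ :=
  (∑ τ ∈ 𝒯, (((Finset.range T).filter (fun t => τ t = sa)).card : ℝ)) /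
    ((𝒯.card : ℝ) * (T : ℝ))

/-- the total probability of the trajectory set `𝒯` is bounded
below by `|𝒯|` times the geometric mean of the dynamics probabilities times
`exp(T·L)`, where `L` is the supervised log-likelihood under the empirical
state-action distribution of `𝒯`. -/
theorem stmt_8 {S A : Type*} [Fintype S] [Fintype A] [DecidableEq S] [DecidableEq A]
    (T : ℕ) (hT : 1 ≤ T) (p₀ : S → ℝ) (P : S × A → S → ℝ) (π : S × A → ℝ)
    (𝒯 : Finset (ℕ → S × A)) (h𝒯 : 𝒯.Nonempty)
    (hpd : ∀ τ ∈ 𝒯, 0 < dynProb p₀ P T τ)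
    (hπ : ∀ τ ∈ 𝒯, ∀ t < T, 0 < π (τ t) ∧ π (τ t) ≤ 1) :
    (𝒯.card : ℝ) * (∏ τ ∈ 𝒯, dynProb p₀ P T τ) ^ ((1 : ℝ) / (𝒯.card : ℝ)) *
        Real.exp ((T : ℝ) * ∑ sa : S × A, empDist 𝒯 T sa * Real.log (π sa))
      ≤ ∑ τ ∈ 𝒯, trajProb p₀ P π T τ := by
  have hN : (0 : ℝ) < (𝒯.card : ℝ) := by
    exact_mod_cast Finset.card_pos.mpr h𝒯
  have hTpos : (0 : ℝ) < (T : ℝ) := by exact_mod_cast hT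
  have hπpos : ∀ τ ∈ 𝒯, 0 < ∏ t ∈ Finset.range T, π (τ t) := by
    intro τ hτ
    exact Finset.prod_pos fun t ht => (hπ τ hτ t (Finset.mem_range.mp ht)).1
  have hθpos : ∀ τ ∈ 𝒯, 0 < trajProb p₀ P π T τ := fun τ hτ =>
    mul_pos (hpd τ hτ) (hπpos τ hτ)
  -- Step 1: log-likelihood rewrite
  have hsum : (T : ℝ) * ∑ sa : S × A, empDist 𝒯 T sa * Real.log (π sa)
      = (1 / (𝒯.card : ℝ)) * ∑ τ ∈ 𝒯, ∑ t ∈ Finset.range T, Real.log (π (τ t)) := by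
    have key : ∀ τ : ℕ → S × A,
        ∑ sa : S × A, (((Finset.range T).filter (fun t => τ t = sa)).card : ℝ) * Real.log (π sa)
          = ∑ t ∈ Finset.range T, Real.log (π (τ t)) := by
      intro τ
      have h1 : ∀ sa : S × A,
          (((Finset.range T).filter (fun t => τ t = sa)).card : ℝ) * Real.log (π sa)
            = ∑ t ∈ Finset.range T, if τ t = sa then Real.log (π sa) else 0 := by
        intro sa
        rw [Finset.card_filter]
        push_cast
        rw [Finset.sum_mul]
        exact Finset.sum_congr rfl fun t _ => by split <;> simp
      rw [Finset.sum_congr rfl fun sa _ => h1 sa, Finset.sum_comm]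
      refine Finset.sum_congr rfl fun t _ => ?_
      rw [Finset.sum_ite_eq Finset.univ (τ t) (fun sa => Real.log (π sa))]
      simp
    have h2 : ∑ sa : S × A, empDist 𝒯 T sa * Real.log (π sa)
        = (1 / ((𝒯.card : ℝ) * (T : ℝ))) * ∑ τ ∈ 𝒯, ∑ t ∈ Finset.range T,
            Real.log (π (τ t)) := by
      unfold empDist
      rw [Finset.mul_sum]
      have l1 : ∀ sa : S × A,
          (∑ τ ∈ 𝒯, (((Finset.range T).filter (fun t => τ t = sa)).card : ℝ)) /
              ((𝒯.card : ℝ) * (T : ℝ)) * Real.log (π sa)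
            = ∑ τ ∈ 𝒯, 1 / ((𝒯.card : ℝ) * (T : ℝ)) *
                ((((Finset.range T).filter (fun t => τ t = sa)).card : ℝ) * Real.log (π sa)) := by
        intro sa
        rw [Finset.sum_div, Finset.sum_mul]
        exact Finset.sum_congr rfl fun τ _ => by ring
      rw [Finset.sum_congr rfl fun sa _ => l1 sa, Finset.sum_comm]
      refine Finset.sum_congr rfl fun τ _ => ?_
      rw [← Finset.mul_sum, key τ]
    rw [h2]
    field_simp
  -- Step 2: exponential equals geometric mean of policy products
  have hexp : Real.exp ((T : ℝ) * ∑ sa : S × A, empDist 𝒯 T sa * Real.log (π sa))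
      = ∏ τ ∈ 𝒯, (∏ t ∈ Finset.range T, π (τ t)) ^ ((1 : ℝ) / (𝒯.card : ℝ)) := by
    rw [hsum, Finset.mul_sum, Real.exp_sum]
    refine Finset.prod_congr rfl fun τ hτ => ?_
    have hlog : ∑ t ∈ Finset.range T, Real.log (π (τ t))
        = Real.log (∏ t ∈ Finset.range T, π (τ t)) := by
      rw [Real.log_prod]
      intro t ht
      exact ne_of_gt (hπ τ hτ t (Finset.mem_range.mp ht)).1
    rw [hlog, Real.rpow_def_of_pos (hπpos τ hτ)]
    ring_nf
  rw [hexp]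
  -- Step 3: combine geometric means
  have hdyn : (∏ τ ∈ 𝒯, dynProb p₀ P T τ) ^ ((1 : ℝ) / (𝒯.card : ℝ))
      = ∏ τ ∈ 𝒯, (dynProb p₀ P T τ) ^ ((1 : ℝ) / (𝒯.card : ℝ)) := by
    rw [← Real.finset_prod_rpow 𝒯 _ (fun τ hτ => (hpd τ hτ).le)]
  rw [hdyn, mul_assoc, ← Finset.prod_mul_distrib]
  have hcomb : ∀ τ ∈ 𝒯,
      (dynProb p₀ P T τ) ^ ((1 : ℝ) / (𝒯.card : ℝ)) *
        (∏ t ∈ Finset.range T, π (τ t)) ^ ((1 : ℝ) / (𝒯.card : ℝ))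
      = (trajProb p₀ P π T τ) ^ ((1 : ℝ) / (𝒯.card : ℝ)) := by
    intro τ hτ
    rw [← Real.mul_rpow (hpd τ hτ).le (hπpos τ hτ).le]
    rfl
  rw [Finset.prod_congr rfl hcomb]
  -- Step 4: AM-GM
  have hw' : ∑ _τ ∈ 𝒯, (1 : ℝ) / (𝒯.card : ℝ) = 1 := by
    rw [Finset.sum_const, nsmul_eq_mul]
    field_simp
  have amgm := Real.geom_mean_le_arith_mean_weighted 𝒯
      (fun _ => (1 : ℝ) / (𝒯.card : ℝ)) (fun τ => trajProb p₀ P π T τ)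
      (fun τ _ => by positivity) hw' (fun τ hτ => (hθpos τ hτ).le)
  calc (𝒯.card : ℝ) * ∏ τ ∈ 𝒯, (trajProb p₀ P π T τ) ^ ((1 : ℝ) / (𝒯.card : ℝ))
      ≤ (𝒯.card : ℝ) * ∑ τ ∈ 𝒯, (1 / (𝒯.card : ℝ)) * trajProb p₀ P π T τ :=
        mul_le_mul_of_nonneg_left amgm hN.le
    _ = ∑ τ ∈ 𝒯, trajProb p₀ P π T τ := by
        rw [← Finset.mul_sum, ← mul_assoc]
        field_simp
end

section
/- Under the setting of the previous lower bound (finite S, A with m = |A|, horizon T, nonempty finite trajectory set 𝒯 with positive dynamics probabilities, policy π with values in (0,1] on 𝒯, empirical state-action distribution p*), suppose additionally there is a classifier h : S → A and η ≥ 0 such that: (i) for every (s,a) with p*(s,a) > 0 and h(s) = a, π(a|s) = 1; (ii) for every (s,a) with p*(s,a) > 0 and h(s) ≠ a, π(a|s) ≥ (1+e)^{1−m}; and (iii) the misclassified mass satisfies ∑_{(s,a): h(s)≠a} p*(s,a) ≤ η. Then ∑_{(s,a)} p*(s,a)·log π(a|s) ≥ η·(1−m)·log(1+e), and consequently ∑_{τ∈𝒯}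 p_θ(τ) ≥ D·(1+e)^{η(1−m)T}, where D = |𝒯|·(∏_{τ∈𝒯} p_d(τ))^{1/|𝒯|}. -/
open Finset

/-- if a classifier `h` with misclassified mass at most `η` agrees
with the policy (`π = 1` on correctly classified supported pairs, and
`π ≥ (1+e)^{1−m}` on misclassified supported pairs), then the supervised
log-likelihood satisfies `L ≥ η(1−m)·log(1+e)`, and consequently
`∑_{τ∈𝒯} p_θ(τ) ≥ D·(1+e)^{η(1−m)T}` with
`D = |𝒯|·(∏_{τ∈𝒯} p_d(τ))^{1/|𝒯|}`. -/
theorem stmt_9 {S A : Type*} [Fintype S] [Fintype A] [DecidableEq S] [DecidableEq A]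
    (T : ℕ) (hT : 1 ≤ T) (p₀ : S → ℝ) (P : S × A → S → ℝ) (π : S × A → ℝ)
    (𝒯 : Finset (ℕ → S × A)) (h𝒯 : 𝒯.Nonempty)
    (hpd : ∀ τ ∈ 𝒯, 0 < dynProb p₀ P T τ)
    (hπ : ∀ τ ∈ 𝒯, ∀ t < T, 0 < π (τ t) ∧ π (τ t) ≤ 1)
    (h : S → A) (η : ℝ) (hη : 0 ≤ η)
    (hcorrect : ∀ s a, 0 < empDist 𝒯 T (s, a) → h s = a → π (s, a) = 1)
    (hmis : ∀ s a, 0 < empDist 𝒯 T (s, a) → h s ≠ a →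
      (1 + Real.exp 1) ^ ((1 : ℝ) - (Fintype.card A : ℝ)) ≤ π (s, a))
    (hmass : ∑ sa ∈ Finset.univ.filter (fun sa : S × A => h sa.1 ≠ sa.2),
      empDist 𝒯 T sa ≤ η) :
    η * (1 - (Fintype.card A : ℝ)) * Real.log (1 + Real.exp 1)
        ≤ ∑ sa : S × A, empDist 𝒯 T sa * Real.log (π sa) ∧
    (𝒯.card : ℝ) * (∏ τ ∈ 𝒯, dynProb p₀ P T τ) ^ ((1 : ℝ) / (𝒯.card : ℝ)) *
        (1 + Real.exp 1) ^ (η * (1 - (Fintype.card A : ℝ)) * (T : ℝ))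
      ≤ ∑ τ ∈ 𝒯, trajProb p₀ P π T τ := by
  classical
  obtain ⟨τ₀, hτ₀mem⟩ := h𝒯
  have hApos : 0 < Fintype.card A := Fintype.card_pos_iff.mpr ⟨(τ₀ 0).2⟩
  have hm1 : (1:ℝ) ≤ (Fintype.card A : ℝ) := by exact_mod_cast hApos
  have hbase : (0:ℝ) < 1 + Real.exp 1 := by positivity
  have hlog : 0 ≤ Real.log (1 + Real.exp 1) :=
    Real.log_nonneg (by nlinarith [Real.exp_pos 1])
  set c : ℝ := (1 - (Fintype.card A : ℝ)) * Real.log (1 + Real.exp 1) with hc_def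
  have hc : c ≤ 0 := mul_nonpos_of_nonpos_of_nonneg (by linarith) hlog
  have hn : 0 < (𝒯.card : ℝ) := by
    exact_mod_cast Finset.card_pos.mpr ⟨τ₀, hτ₀mem⟩
  have hTpos : 0 < (T:ℝ) := by exact_mod_cast hT
  have hemp : ∀ sa : S × A, 0 ≤ empDist 𝒯 T sa := by
    intro sa
    unfold empDist
    apply div_nonneg
    · exact Finset.sum_nonneg fun τ _ => by positivity
    · positivity
  -- Part 1
  have part1 : η * (1 - (Fintype.card A : ℝ)) * Real.log (1 + Real.exp 1)
      ≤ ∑ sa : S × A, empDist 𝒯 T sa * Real.log (π sa) := by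
    have hsplit := Finset.sum_filter_add_sum_filter_not Finset.univ
      (fun sa : S × A => h sa.1 ≠ sa.2) (fun sa => empDist 𝒯 T sa * Real.log (π sa))
    have hcor : ∑ sa ∈ Finset.univ.filter (fun sa : S × A => ¬ h sa.1 ≠ sa.2),
        empDist 𝒯 T sa * Real.log (π sa) = 0 := by
      apply Finset.sum_eq_zero
      intro sa hsa
      simp only [Finset.mem_filter, not_not] at hsa
      rcases (hemp sa).lt_or_eq with hpos | h0
      · have hπ1 := hcorrect sa.1 sa.2 (by simpa using hpos) hsa.2
        rw [show π sa = 1 from by simpa using hπ1, Real.log_one, mul_zero]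
      · rw [← h0, zero_mul]
    have hmisb : ∀ sa ∈ Finset.univ.filter (fun sa : S × A => h sa.1 ≠ sa.2),
        empDist 𝒯 T sa * c ≤ empDist 𝒯 T sa * Real.log (π sa) := by
      intro sa hsa
      simp only [Finset.mem_filter] at hsa
      rcases (hemp sa).lt_or_eq with hpos | h0
      · refine mul_le_mul_of_nonneg_left ?_ (hemp sa)
        have hπle := hmis sa.1 sa.2 (by simpa using hpos) hsa.2
        have hrpos : (0:ℝ) < (1 + Real.exp 1) ^ ((1:ℝ) - (Fintype.card A : ℝ)) :=
          Real.rpow_pos_of_pos hbase _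
        have hlogle : Real.log ((1 + Real.exp 1) ^ ((1:ℝ) - (Fintype.card A : ℝ)))
            ≤ Real.log (π (sa.1, sa.2)) := Real.log_le_log hrpos hπle
        rw [Real.log_rpow hbase] at hlogle
        simpa using hlogle
      · rw [← h0, zero_mul, zero_mul]
    calc η * (1 - (Fintype.card A : ℝ)) * Real.log (1 + Real.exp 1)
        = η * c := by rw [hc_def]; ring
      _ ≤ (∑ sa ∈ Finset.univ.filter (fun sa : S × A => h sa.1 ≠ sa.2),
            empDist 𝒯 T sa) * c := by
          rw [mul_comm η c, mul_comm _ c]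
          exact mul_le_mul_of_nonpos_left hmass hc
      _ = ∑ sa ∈ Finset.univ.filter (fun sa : S × A => h sa.1 ≠ sa.2),
            empDist 𝒯 T sa * c := Finset.sum_mul _ _ _
      _ ≤ ∑ sa ∈ Finset.univ.filter (fun sa : S × A => h sa.1 ≠ sa.2),
            empDist 𝒯 T sa * Real.log (π sa) := Finset.sum_le_sum hmisb
      _ = ∑ sa : S × A, empDist 𝒯 T sa * Real.log (π sa) := by
          rw [← hsplit, hcor, add_zero]
  refine ⟨part1, ?_⟩
  -- Part 2
  have hπpos : ∀ τ ∈ 𝒯, ∀ t ∈ Finset.range T, 0 < π (τ t) := fun τ hτ t ht =>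
    (hπ τ hτ t (Finset.mem_range.mp ht)).1
  set Q : (ℕ → S × A) → ℝ := fun τ => ∏ t ∈ Finset.range T, π (τ t) with hQ_def
  have hQpos : ∀ τ ∈ 𝒯, 0 < Q τ := fun τ hτ =>
    Finset.prod_pos (hπpos τ hτ)
  have hθpos : ∀ τ ∈ 𝒯, 0 < trajProb p₀ P π T τ := fun τ hτ =>
    mul_pos (hpd τ hτ) (hQpos τ hτ)
  -- key rewriting of the log-likelihood
  have hkey : ∀ τ : ℕ → S × A,
      ∑ sa : S × A, (((Finset.range T).filter (fun t => τ t = sa)).card : ℝ) * Real.log (π sa)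
        = ∑ t ∈ Finset.range T, Real.log (π (τ t)) := by
    intro τ
    have h1 : ∀ sa : S × A,
        (((Finset.range T).filter (fun t => τ t = sa)).card : ℝ) * Real.log (π sa)
          = ∑ t ∈ Finset.range T, if τ t = sa then Real.log (π sa) else 0 := by
      intro sa
      rw [← Finset.sum_filter, Finset.sum_const, nsmul_eq_mul]
    simp_rw [h1]
    rw [Finset.sum_comm]
    refine Finset.sum_congr rfl fun t _ => ?_
    simp
  have hL : ∑ sa : S × A, empDist 𝒯 T sa * Real.log (π sa)
      = (∑ τ ∈ 𝒯, ∑ t ∈ Finset.range T, Real.log (π (τ t))) / ((𝒯.card : ℝ) * T) := by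
    unfold empDist
    rw [Finset.sum_div]
    have : ∀ sa : S × A,
        (∑ τ ∈ 𝒯, (((Finset.range T).filter (fun t => τ t = sa)).card : ℝ))
            / ((𝒯.card : ℝ) * T) * Real.log (π sa)
          = ∑ τ ∈ 𝒯, (((Finset.range T).filter (fun t => τ t = sa)).card : ℝ)
              * Real.log (π sa) / ((𝒯.card : ℝ) * T) := by
      intro sa
      rw [div_mul_eq_mul_div, Finset.sum_mul, Finset.sum_div]
    simp_rw [this]
    rw [Finset.sum_comm]
    refine Finset.sum_congr rfl fun τ _ => ?_
    rw [← Finset.sum_div, hkey τ]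
  have hSig : η * (1 - (Fintype.card A : ℝ)) * (T:ℝ) * Real.log (1 + Real.exp 1) * (𝒯.card : ℝ)
      ≤ ∑ τ ∈ 𝒯, ∑ t ∈ Finset.range T, Real.log (π (τ t)) := by
    have h2 : η * c * ((𝒯.card : ℝ) * T)
        ≤ (∑ τ ∈ 𝒯, ∑ t ∈ Finset.range T, Real.log (π (τ t))) := by
      have := mul_le_mul_of_nonneg_right part1 (le_of_lt (mul_pos hn hTpos))
      rw [hL, div_mul_cancel₀] at this
      · calc η * c * ((𝒯.card : ℝ) * T)
            = η * (1 - (Fintype.card A : ℝ)) * Real.log (1 + Real.exp 1)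
              * ((𝒯.card : ℝ) * T) := by rw [hc_def]; ring
          _ ≤ _ := this
      · exact ne_of_gt (mul_pos hn hTpos)
    calc η * (1 - (Fintype.card A : ℝ)) * (T:ℝ) * Real.log (1 + Real.exp 1) * (𝒯.card : ℝ)
        = η * c * ((𝒯.card : ℝ) * T) := by rw [hc_def]; ring
      _ ≤ _ := h2
  -- AM-GM
  have hamgm : (𝒯.card : ℝ) * (∏ τ ∈ 𝒯, trajProb p₀ P π T τ) ^ ((1:ℝ) / (𝒯.card : ℝ))
      ≤ ∑ τ ∈ 𝒯, trajProb p₀ P π T τ := by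
    have := Real.geom_mean_le_arith_mean_weighted 𝒯 (fun _ => (1:ℝ) / (𝒯.card : ℝ))
      (fun τ => trajProb p₀ P π T τ) (fun i _ => by positivity)
      (by rw [Finset.sum_const, nsmul_eq_mul, mul_one_div, div_self (ne_of_gt hn)])
      (fun τ hτ => (hθpos τ hτ).le)
    rw [Real.finset_prod_rpow 𝒯 _ (fun τ hτ => (hθpos τ hτ).le)] at this
    have h3 : ∑ τ ∈ 𝒯, (1:ℝ) / (𝒯.card : ℝ) * trajProb p₀ P π T τ
        = (1 / (𝒯.card : ℝ)) * ∑ τ ∈ 𝒯, trajProb p₀ P π T τ := by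
      rw [Finset.mul_sum]
    rw [h3] at this
    calc (𝒯.card : ℝ) * (∏ τ ∈ 𝒯, trajProb p₀ P π T τ) ^ ((1:ℝ) / (𝒯.card : ℝ))
        ≤ (𝒯.card : ℝ) * ((1 / (𝒯.card : ℝ)) * ∑ τ ∈ 𝒯, trajProb p₀ P π T τ) :=
          mul_le_mul_of_nonneg_left this hn.le
      _ = ∑ τ ∈ 𝒯, trajProb p₀ P π T τ := by
          field_simp
  -- relate (∏ trajProb)^{1/n} to (∏ dynProb)^{1/n} * exp(...)
  have hQn : (0:ℝ) < ∏ τ ∈ 𝒯, Q τ := Finset.prod_pos hQpos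
  have hdn : (0:ℝ) < ∏ τ ∈ 𝒯, dynProb p₀ P T τ := Finset.prod_pos hpd
  have hprodsplit : (∏ τ ∈ 𝒯, trajProb p₀ P π T τ) ^ ((1:ℝ) / (𝒯.card : ℝ))
      = (∏ τ ∈ 𝒯, dynProb p₀ P T τ) ^ ((1:ℝ) / (𝒯.card : ℝ))
        * (∏ τ ∈ 𝒯, Q τ) ^ ((1:ℝ) / (𝒯.card : ℝ)) := by
    rw [show (∏ τ ∈ 𝒯, trajProb p₀ P π T τ)
        = (∏ τ ∈ 𝒯, dynProb p₀ P T τ) * (∏ τ ∈ 𝒯, Q τ) from by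
      rw [← Finset.prod_mul_distrib]; rfl]
    exact Real.mul_rpow hdn.le hQn.le
  have hQrpow : (1 + Real.exp 1) ^ (η * (1 - (Fintype.card A : ℝ)) * (T:ℝ))
      ≤ (∏ τ ∈ 𝒯, Q τ) ^ ((1:ℝ) / (𝒯.card : ℝ)) := by
    rw [Real.rpow_def_of_pos hbase, Real.rpow_def_of_pos hQn]
    apply Real.exp_le_exp.mpr
    have hlogQ : Real.log (∏ τ ∈ 𝒯, Q τ)
        = ∑ τ ∈ 𝒯, ∑ t ∈ Finset.range T, Real.log (π (τ t)) := by
      rw [Real.log_prod (fun τ hτ => (hQpos τ hτ).ne')]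
      exact Finset.sum_congr rfl fun τ hτ =>
        Real.log_prod (fun t ht => (hπpos τ hτ t ht).ne')
    rw [hlogQ]
    rw [mul_one_div, le_div_iff₀ hn]
    calc Real.log (1 + Real.exp 1) * (η * (1 - (Fintype.card A : ℝ)) * (T:ℝ)) * (𝒯.card : ℝ)
        = η * (1 - (Fintype.card A : ℝ)) * (T:ℝ) * Real.log (1 + Real.exp 1) * (𝒯.card : ℝ) := by
          ring
      _ ≤ _ := hSig
  calc (𝒯.card : ℝ) * (∏ τ ∈ 𝒯, dynProb p₀ P T τ) ^ ((1:ℝ) / (𝒯.card : ℝ))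
        * (1 + Real.exp 1) ^ (η * (1 - (Fintype.card A : ℝ)) * (T:ℝ))
      ≤ (𝒯.card : ℝ) * (∏ τ ∈ 𝒯, dynProb p₀ P T τ) ^ ((1:ℝ) / (𝒯.card : ℝ))
        * (∏ τ ∈ 𝒯, Q τ) ^ ((1:ℝ) / (𝒯.card : ℝ)) := by
        apply mul_le_mul_of_nonneg_left hQrpow
        positivity
    _ = (𝒯.card : ℝ) * (∏ τ ∈ 𝒯, trajProb p₀ P π T τ) ^ ((1:ℝ) / (𝒯.card : ℝ)) := by
        rw [hprodsplit, mul_assoc]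
    _ ≤ ∑ τ ∈ 𝒯, trajProb p₀ P π T τ := hamgm
end

section
/- Let N ≥ 1 and k ≥ 0 be integers, and let T be a subset of a set of size N with |T| = t. For any integer 0 ≤ i' ≤ t, the number of functions f : {1,…,k} → {1,…,N} whose range contains exactly i' elements of T equals C(t, i')·∑_{j=0}^{i'} (−1)^j·C(i', j)·(N − t + i' − j)^k. Consequently, if k samples are drawn independently and uniformly at random from the N elements, the probability that at least i distinct elements of T are sampled equals 1 − ∑_{i'=0}^{i−1} C(t,i')·[∑_{j=0}^{i'} (−1)^j C(i',j)(N − t + i' − j)^k] / N^k. -/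
open Finset

private lemma count_into (N k : ℕ) (C : Finset (Fin N)) :
    (Finset.univ.filter (fun f : Fin k → Fin N => ∀ m, f m ∈ C)).card = C.card ^ k := by
  have h : Finset.univ.filter (fun f : Fin k → Fin N => ∀ m, f m ∈ C)
      = Fintype.piFinset (fun _ : Fin k => C) := by
    ext f; simp [Fintype.mem_piFinset]
  rw [h, Fintype.card_piFinset_const]

private lemma count_cover (N k : ℕ) (S C : Finset (Fin N)) :
    ((Finset.univ.filter (fun f : Fin k → Fin N =>
        (∀ m, f m ∈ C) ∧ S ⊆ Finset.image f Finset.univ)).card : ℤ)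
      = ∑ R ∈ S.powerset, (-1 : ℤ) ^ R.card * ((C \ R).card : ℤ) ^ k := by
  have step1 : ∀ R : Finset (Fin N),
      (-1 : ℤ) ^ R.card * ((C \ R).card : ℤ) ^ k
        = ∑ _f ∈ Finset.univ.filter (fun f : Fin k → Fin N => ∀ m, f m ∈ C \ R),
            (-1 : ℤ) ^ R.card := by
    intro R
    rw [Finset.sum_const, nsmul_eq_mul, count_into N k (C \ R)]
    push_cast
    ring
  symm
  calc (∑ R ∈ S.powerset, (-1 : ℤ) ^ R.card * ((C \ R).card : ℤ) ^ k)
      = ∑ R ∈ S.powerset,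
          ∑ _f ∈ Finset.univ.filter (fun f : Fin k → Fin N => ∀ m, f m ∈ C \ R),
            (-1 : ℤ) ^ R.card := Finset.sum_congr rfl fun R _ => step1 R
    _ = ∑ f ∈ Finset.univ.filter (fun f : Fin k → Fin N => ∀ m, f m ∈ C),
          ∑ R ∈ (S \ Finset.image f Finset.univ).powerset, (-1 : ℤ) ^ R.card := by
        refine Finset.sum_comm' ?_
        intro R f
        simp only [Finset.mem_powerset, Finset.mem_filter, Finset.mem_univ, true_and]
        constructor
        · rintro ⟨hRS, hf⟩
          constructor
          · intro x hxR
            rw [Finset.mem_sdiff]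
            refine ⟨hRS hxR, fun hx => ?_⟩
            obtain ⟨m, -, rfl⟩ := Finset.mem_image.1 hx
            exact (Finset.mem_sdiff.1 (hf m)).2 hxR
          · exact fun m => (Finset.mem_sdiff.1 (hf m)).1
        · rintro ⟨hR, hf⟩
          constructor
          · intro x hx
            exact (Finset.mem_sdiff.1 (hR hx)).1
          · intro m
            rw [Finset.mem_sdiff]
            exact ⟨hf m, fun hm => (Finset.mem_sdiff.1 (hR hm)).2
              (Finset.mem_image_of_mem f (Finset.mem_univ m))⟩
    _ = ∑ f ∈ Finset.univ.filter (fun f : Fin k → Fin N => ∀ m, f m ∈ C),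
          (if S ⊆ Finset.image f Finset.univ then (1 : ℤ) else 0) := by
        refine Finset.sum_congr rfl fun f _ => ?_
        rw [Finset.sum_powerset_neg_one_pow_card]
        congr 1
        simp [Finset.sdiff_eq_empty_iff_subset]
    _ = ((Finset.univ.filter (fun f : Fin k → Fin N =>
          (∀ m, f m ∈ C) ∧ S ⊆ Finset.image f Finset.univ)).card : ℤ) := by
        rw [Finset.sum_boole, Finset.filter_filter]

private lemma cond_iff (N k : ℕ) (Tset S : Finset (Fin N)) (hS : S ⊆ Tset)
    (f : Fin k → Fin N) :
    Tset.filter (fun x => x ∈ Finset.image f Finset.univ) = S ↔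
      (∀ m, f m ∈ (Tset \ S)ᶜ) ∧ S ⊆ Finset.image f Finset.univ := by
  constructor
  · intro h
    constructor
    · intro m
      simp only [Finset.mem_compl, Finset.mem_sdiff, not_and, not_not]
      intro hm
      have hmem : f m ∈ Tset.filter (fun x => x ∈ Finset.image f Finset.univ) :=
        Finset.mem_filter.2 ⟨hm, Finset.mem_image_of_mem f (Finset.mem_univ m)⟩
      rw [h] at hmem
      exact hmem
    · intro x hx
      have : x ∈ Tset.filter (fun x => x ∈ Finset.image f Finset.univ) := h ▸ hx
      exact (Finset.mem_filter.1 this).2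
  · rintro ⟨h1, h2⟩
    ext x
    simp only [Finset.mem_filter]
    constructor
    · rintro ⟨hxT, hxim⟩
      obtain ⟨m, -, rfl⟩ := Finset.mem_image.1 hxim
      have := h1 m
      simp only [Finset.mem_compl, Finset.mem_sdiff, not_and, not_not] at this
      exact this hxT
    · intro hxS
      exact ⟨hS hxS, h2 hxS⟩

private lemma count_exact (N k : ℕ) (Tset S : Finset (Fin N)) (hS : S ⊆ Tset) :
    ((Finset.univ.filter (fun f : Fin k → Fin N =>
        Tset.filter (fun x => x ∈ Finset.image f Finset.univ) = S)).card : ℤ)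
      = ∑ j ∈ Finset.range (S.card + 1),
          (-1 : ℤ) ^ j * (S.card.choose j : ℤ) *
            ((N : ℤ) - (Tset.card : ℤ) + (S.card : ℤ) - (j : ℤ)) ^ k := by
  set C : Finset (Fin N) := (Tset \ S)ᶜ with hC
  have hfilter : Finset.univ.filter (fun f : Fin k → Fin N =>
        Tset.filter (fun x => x ∈ Finset.image f Finset.univ) = S)
      = Finset.univ.filter (fun f : Fin k → Fin N =>
        (∀ m, f m ∈ C) ∧ S ⊆ Finset.image f Finset.univ) := by
    apply Finset.filter_congr
    intro f _
    exact cond_iff N k Tset S hS f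
  have hst : S.card ≤ Tset.card := Finset.card_le_card hS
  have htN : Tset.card ≤ N := by
    simpa using Finset.card_le_univ Tset
  have hCcard : (C.card : ℤ) = (N : ℤ) - (Tset.card : ℤ) + (S.card : ℤ) := by
    have h1 : C.card = N - (Tset.card - S.card) := by
      rw [hC, Finset.card_compl, Finset.card_sdiff_of_subset hS, Fintype.card_fin]
    omega
  rw [hfilter, count_cover N k S C]
  have hterm : ∀ R ∈ S.powerset,
      (-1 : ℤ) ^ R.card * ((C \ R).card : ℤ) ^ k
        = (fun j : ℕ => (-1 : ℤ) ^ j *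
            ((N : ℤ) - (Tset.card : ℤ) + (S.card : ℤ) - (j : ℤ)) ^ k) R.card := by
    intro R hR
    have hRS : R ⊆ S := Finset.mem_powerset.1 hR
    have hRC : R ⊆ C := by
      intro x hx
      simp only [hC, Finset.mem_compl, Finset.mem_sdiff, not_and, not_not]
      intro _
      exact hRS hx
    have hRcard : R.card ≤ C.card := Finset.card_le_card hRC
    have h2 : ((C \ R).card : ℤ) = (C.card : ℤ) - (R.card : ℤ) := by
      rw [Finset.card_sdiff_of_subset hRC]
      omega
    simp only [h2, hCcard]
  rw [Finset.sum_congr rfl hterm, Finset.sum_powerset, Finset.sum_congr rfl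
    (fun j _ => Finset.sum_powersetCard j S
      (fun j : ℕ => (-1 : ℤ) ^ j *
        ((N : ℤ) - (Tset.card : ℤ) + (S.card : ℤ) - (j : ℤ)) ^ k))]
  refine Finset.sum_congr rfl fun j _ => ?_
  rw [nsmul_eq_mul]
  ring

private lemma count_eq (N k : ℕ) (Tset : Finset (Fin N)) (i' : ℕ) :
    ((Finset.univ.filter (fun f : Fin k → Fin N =>
        (Tset.filter (fun x => x ∈ Finset.image f Finset.univ)).card = i')).card : ℤ)
      = (Tset.card.choose i' : ℤ) *
          ∑ j ∈ Finset.range (i' + 1),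
            (-1 : ℤ) ^ j * (i'.choose j : ℤ) *
              ((N : ℤ) - (Tset.card : ℤ) + (i' : ℤ) - (j : ℤ)) ^ k := by
  have hfib : (Finset.univ.filter (fun f : Fin k → Fin N =>
        (Tset.filter (fun x => x ∈ Finset.image f Finset.univ)).card = i')).card
      = ∑ S ∈ Finset.powersetCard i' Tset,
          ((Finset.univ.filter (fun f : Fin k → Fin N =>
            (Tset.filter (fun x => x ∈ Finset.image f Finset.univ)).card = i')).filter
              (fun f => Tset.filter (fun x => x ∈ Finset.image f Finset.univ) = S)).card := by
    apply Finset.card_eq_sum_card_fiberwise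
    intro f hf
    rw [Finset.mem_coe, Finset.mem_filter] at hf
    rw [Finset.mem_coe, Finset.mem_powersetCard]
    exact ⟨Finset.filter_subset _ _, hf.2⟩
  have hsimp : ∀ S ∈ Finset.powersetCard i' Tset,
      ((Finset.univ.filter (fun f : Fin k → Fin N =>
            (Tset.filter (fun x => x ∈ Finset.image f Finset.univ)).card = i')).filter
              (fun f => Tset.filter (fun x => x ∈ Finset.image f Finset.univ) = S))
      = Finset.univ.filter (fun f : Fin k → Fin N =>
            Tset.filter (fun x => x ∈ Finset.image f Finset.univ) = S) := by
    intro S hSmem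
    obtain ⟨hSsub, hScard⟩ := Finset.mem_powersetCard.1 hSmem
    rw [Finset.filter_filter]
    apply Finset.filter_congr
    intro f _
    constructor
    · rintro ⟨-, h⟩; exact h
    · intro h; exact ⟨by rw [h, hScard], h⟩
  rw [hfib]
  push_cast
  have hconst : ∀ S ∈ Finset.powersetCard i' Tset,
      (((Finset.univ.filter (fun f : Fin k → Fin N =>
            (Tset.filter (fun x => x ∈ Finset.image f Finset.univ)).card = i')).filter
              (fun f => Tset.filter (fun x => x ∈ Finset.image f Finset.univ) = S)).card : ℤ)
        = ∑ j ∈ Finset.range (i' + 1),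
            (-1 : ℤ) ^ j * (i'.choose j : ℤ) *
              ((N : ℤ) - (Tset.card : ℤ) + (i' : ℤ) - (j : ℤ)) ^ k := by
    intro S hS
    rw [hsimp S hS]
    obtain ⟨hSsub, hScard⟩ := Finset.mem_powersetCard.1 hS
    rw [count_exact N k Tset S hSsub, hScard]
  rw [Finset.sum_congr rfl hconst, Finset.sum_const, Finset.card_powersetCard, nsmul_eq_mul]

/-- by inclusion–exclusion, the number of functions
`f : Fin k → Fin N` whose range contains exactly `i'` elements of `T` equals
`C(t,i')·∑_{j=0}^{i'} (−1)^j C(i',j)(N−t+i'−j)^k`; consequently the probability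
of sampling at least `i` distinct elements of `T` in `k` uniform draws equals
`1 − ∑_{i'=0}^{i−1} C(t,i')·[∑_j (−1)^j C(i',j)(N−t+i'−j)^k]/N^k`. -/
theorem stmt_12 (N k : ℕ) (hN : 1 ≤ N) (Tset : Finset (Fin N)) (i : ℕ) :
    (∀ i' : ℕ, i' ≤ Tset.card →
      ((Finset.univ.filter (fun f : Fin k → Fin N =>
          (Tset.filter (fun x => x ∈ Finset.image f Finset.univ)).card = i')).card : ℤ)
        = (Tset.card.choose i' : ℤ) *
            ∑ j ∈ Finset.range (i' + 1),
              (-1 : ℤ) ^ j * (i'.choose j : ℤ) *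
                ((N : ℤ) - (Tset.card : ℤ) + (i' : ℤ) - (j : ℤ)) ^ k) ∧
    (((Finset.univ.filter (fun f : Fin k → Fin N =>
          i ≤ (Tset.filter (fun x => x ∈ Finset.image f Finset.univ)).card)).card : ℝ) /
        (N : ℝ) ^ k
      = 1 - ∑ i' ∈ Finset.range i,
          ((Tset.card.choose i' : ℝ) *
            ∑ j ∈ Finset.range (i' + 1),
              (-1 : ℝ) ^ j * (i'.choose j : ℝ) *
                ((N : ℝ) - (Tset.card : ℝ) + (i' : ℝ) - (j : ℝ)) ^ k) / (N : ℝ) ^ k) := by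
  constructor
  · intro i' _
    exact count_eq N k Tset i'
  · have hNk : ((N : ℝ) ^ k) ≠ 0 := by positivity
    set cnt : (Fin k → Fin N) → ℕ :=
      fun f => (Tset.filter (fun x => x ∈ Finset.image f Finset.univ)).card with hcnt
    have h2 : (Finset.univ.filter (fun f : Fin k → Fin N => ¬ i ≤ cnt f)).card
        = ∑ i' ∈ Finset.range i,
            (Finset.univ.filter (fun f : Fin k → Fin N => cnt f = i')).card := by
      have := Finset.card_eq_sum_card_fiberwise
        (f := cnt) (s := Finset.univ.filter (fun f : Fin k → Fin N => ¬ i ≤ cnt f))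
        (t := Finset.range i)
        (fun f hf => by
          rw [Finset.mem_coe, Finset.mem_filter] at hf
          rw [Finset.mem_coe, Finset.mem_range]
          omega)
      rw [this]
      refine Finset.sum_congr rfl fun i' hi' => ?_
      rw [Finset.filter_filter]
      congr 1
      apply Finset.filter_congr
      intro f _
      rw [Finset.mem_range] at hi'
      constructor
      · rintro ⟨-, h⟩; exact h
      · intro h; exact ⟨by omega, h⟩
    have h3 : (Finset.univ.filter (fun f : Fin k → Fin N => i ≤ cnt f)).card
        + (Finset.univ.filter (fun f : Fin k → Fin N => ¬ i ≤ cnt f)).card = N ^ k := by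
      rw [Finset.card_filter_add_card_filter_not, Finset.card_univ,
        Fintype.card_pi_const, Fintype.card_fin]
    have hcast : ∀ i' : ℕ,
        (((Finset.univ.filter (fun f : Fin k → Fin N => cnt f = i')).card : ℝ))
          = ((Tset.card.choose i' : ℝ) *
              ∑ j ∈ Finset.range (i' + 1),
                (-1 : ℝ) ^ j * (i'.choose j : ℝ) *
                  ((N : ℝ) - (Tset.card : ℝ) + (i' : ℝ) - (j : ℝ)) ^ k) := by
      intro i'
      have := count_eq N k Tset i'
      have h := congrArg (fun z : ℤ => (z : ℝ)) this
      push_cast at h ⊢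
      convert h using 2
    have hA : ((Finset.univ.filter (fun f : Fin k → Fin N => i ≤ cnt f)).card : ℝ)
        = (N : ℝ) ^ k - ∑ i' ∈ Finset.range i,
            ((Tset.card.choose i' : ℝ) *
              ∑ j ∈ Finset.range (i' + 1),
                (-1 : ℝ) ^ j * (i'.choose j : ℝ) *
                  ((N : ℝ) - (Tset.card : ℝ) + (i' : ℝ) - (j : ℝ)) ^ k) := by
      have := congrArg (fun n : ℕ => (n : ℝ)) h3
      push_cast at this
      rw [h2] at h3
      have hcast2 : ((Finset.univ.filter (fun f : Fin k → Fin N => i ≤ cnt f)).card : ℝ)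
          + ∑ i' ∈ Finset.range i,
              (((Finset.univ.filter (fun f : Fin k → Fin N => cnt f = i')).card : ℝ))
          = (N : ℝ) ^ k := by
        exact_mod_cast congrArg (fun n : ℕ => (n : ℝ)) h3
      rw [Finset.sum_congr rfl (fun i' _ => hcast i')] at hcast2
      linarith
    rw [hA, sub_div, div_self hNk, Finset.sum_div]
end

section
/- Let m ≥ 1 and let φ_1, …, φ_m be positive real numbers. For a permutation σ of {1,…,m}, define the Plackett–Luce permutation probability P(σ) = ∏_{t=1}^{m} φ_{σ(t)} / (∑_{l=t}^{m} φ_{σ(l)}). Then for every index i, the top-one probability equals the softmax value: ∑_{σ : σ(1) = i} P(σ) = φ_i / (∑_{j=1}^{m} φ_j). In particular, with φ_j = exp(λ_j) for action values λ_1,…,λ_m, the probability that action i is ranked on top of the list is e^{λ_i}/∑_{j=1}^m e^{λ_j}. -/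
open Finset Equiv

lemma sum_Ici_succ' {n : ℕ} (x : Fin n) (f : Fin (n+1) → ℝ) :
    ∑ l ∈ Finset.Ici x.succ, f l = ∑ y ∈ Finset.Ici x, f y.succ := by
  have h : Finset.Ici x.succ = (Finset.Ici x).map (Fin.succEmb n) := by
    ext l
    simp only [Finset.mem_Ici, Finset.mem_map, Fin.succEmb]
    constructor
    · intro hl
      have hl' : (x.succ : ℕ) ≤ (l : ℕ) := hl
      have h0 : l ≠ 0 := by
        intro h; rw [h] at hl'; simp at hl'
      refine ⟨l.pred h0, ?_, by simp⟩
      rw [Fin.le_def, Fin.coe_pred]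
      simp only [Fin.val_succ] at hl'
      omega
    · rintro ⟨y, hy, rfl⟩
      exact Fin.succ_le_succ_iff.mpr hy
  rw [h, Finset.sum_map]
  rfl

lemma PL_key {n : ℕ} (φ : Fin (n+1) → ℝ) (p : Fin (n+1)) (τ : Perm (Fin n)) :
    (∏ t : Fin (n+1), φ (Equiv.Perm.decomposeFin.symm (p, τ) t) /
        ∑ l ∈ Finset.Ici t, φ (Equiv.Perm.decomposeFin.symm (p, τ) l))
      = (φ p / ∑ j, φ j) *
        ∏ x : Fin n, (φ (Equiv.swap 0 p (τ x).succ) /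
          ∑ y ∈ Finset.Ici x, φ (Equiv.swap 0 p (τ y).succ)) := by
  set σ := Equiv.Perm.decomposeFin.symm (p, τ) with hσ
  rw [Fin.prod_univ_succ]
  congr 1
  · have h0 : σ 0 = p := Equiv.Perm.decomposeFin_symm_apply_zero p τ
    have : (Finset.Ici (0 : Fin (n+1))) = Finset.univ := by
      ext x; simp [Fin.zero_le]
    rw [h0, this, Equiv.sum_comp σ φ]
  · refine Finset.prod_congr rfl fun x _ => ?_
    have hs : ∀ y : Fin n, σ y.succ = Equiv.swap 0 p (τ y).succ := fun y =>
      Equiv.Perm.decomposeFin_symm_apply_succ τ p y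
    rw [hs x, sum_Ici_succ']
    congr 1
    exact Finset.sum_congr rfl fun y _ => by rw [hs y]

lemma PL_sum : ∀ (n : ℕ) (φ : Fin n → ℝ), (∀ j, 0 < φ j) →
    ∑ σ : Equiv.Perm (Fin n), ∏ t : Fin n,
      φ (σ t) / ∑ l ∈ Finset.Ici t, φ (σ l) = 1 := by
  intro n
  induction n with
  | zero => intro φ hφ; simp
  | succ n ih =>
    intro φ hφ
    rw [← Equiv.sum_comp Equiv.Perm.decomposeFin.symm, Fintype.sum_prod_type]
    have : ∀ p : Fin (n+1), (∑ τ : Perm (Fin n),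
        ∏ t : Fin (n+1), φ (Equiv.Perm.decomposeFin.symm (p, τ) t) /
          ∑ l ∈ Finset.Ici t, φ (Equiv.Perm.decomposeFin.symm (p, τ) l))
        = φ p / ∑ j, φ j := by
      intro p
      have := ih (fun y => φ (Equiv.swap 0 p y.succ)) (fun y => hφ _)
      calc _ = ∑ τ : Perm (Fin n), (φ p / ∑ j, φ j) *
            ∏ x : Fin n, (φ (Equiv.swap 0 p (τ x).succ) /
              ∑ y ∈ Finset.Ici x, φ (Equiv.swap 0 p (τ y).succ)) := by
              exact Finset.sum_congr rfl fun τ _ => PL_key φ p τ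
        _ = (φ p / ∑ j, φ j) * ∑ τ : Perm (Fin n),
            ∏ x : Fin n, (φ (Equiv.swap 0 p (τ x).succ) /
              ∑ y ∈ Finset.Ici x, φ (Equiv.swap 0 p (τ y).succ)) := by
              rw [Finset.mul_sum]
        _ = φ p / ∑ j, φ j := by rw [this]; ring
    rw [Finset.sum_congr rfl fun p _ => this p, ← Finset.sum_div]
    have hpos : (0:ℝ) < ∑ j, φ j :=
      Finset.sum_pos (fun j _ => hφ j) ⟨0, Finset.mem_univ _⟩
    field_simp

theorem stmt_13_main (n : ℕ) (φ : Fin (n+1) → ℝ) (hφ : ∀ j, 0 < φ j)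
    (i : Fin (n+1)) :
    (∑ σ ∈ Finset.univ.filter (fun σ : Equiv.Perm (Fin (n+1)) => σ 0 = i),
        ∏ t : Fin (n+1), φ (σ t) / ∑ l ∈ Finset.Ici t, φ (σ l))
      = φ i / ∑ j, φ j := by
  rw [Finset.sum_filter]
  rw [← Equiv.sum_comp Equiv.Perm.decomposeFin.symm
    (fun σ => if σ 0 = i then ∏ t : Fin (n+1), φ (σ t) / ∑ l ∈ Finset.Ici t, φ (σ l) else 0),
    Fintype.sum_prod_type]
  have step : ∀ p : Fin (n+1), (∑ τ : Perm (Fin n),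
      if (Equiv.Perm.decomposeFin.symm (p, τ)) 0 = i then
        ∏ t : Fin (n+1), φ (Equiv.Perm.decomposeFin.symm (p, τ) t) /
          ∑ l ∈ Finset.Ici t, φ (Equiv.Perm.decomposeFin.symm (p, τ) l) else 0)
      = if p = i then φ p / ∑ j, φ j else 0 := by
    intro p
    by_cases hp : p = i
    · subst hp
      simp only [Equiv.Perm.decomposeFin_symm_apply_zero, if_true]
      have := PL_sum n (fun y => φ (Equiv.swap 0 p y.succ)) (fun y => hφ _)
      calc _ = ∑ τ : Perm (Fin n), (φ p / ∑ j, φ j) *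
            ∏ x : Fin n, (φ (Equiv.swap 0 p (τ x).succ) /
              ∑ y ∈ Finset.Ici x, φ (Equiv.swap 0 p (τ y).succ)) := by
              exact Finset.sum_congr rfl fun τ _ => PL_key φ p τ
        _ = (φ p / ∑ j, φ j) * ∑ τ : Perm (Fin n),
            ∏ x : Fin n, (φ (Equiv.swap 0 p (τ x).succ) /
              ∑ y ∈ Finset.Ici x, φ (Equiv.swap 0 p (τ y).succ)) := by
              rw [Finset.mul_sum]
        _ = φ p / ∑ j, φ j := by rw [this]; ring
    · simp [Equiv.Perm.decomposeFin_symm_apply_zero, hp]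
  rw [Finset.sum_congr rfl fun p _ => step p]
  simp

/-- Top-one probability in the Plackett–Luce model: the total
probability of all permutations ranking item `i` first equals the softmax value
`φ_i / ∑_j φ_j`; in particular with `φ_j = exp(λ_j)` the top-one probability is
`e^{λ_i}/∑_j e^{λ_j}`. -/
theorem stmt_13 (m : ℕ) (hm : 1 ≤ m) (φ : Fin m → ℝ) (hφ : ∀ j, 0 < φ j)
    (i : Fin m) :
    (∑ σ ∈ Finset.univ.filter (fun σ : Equiv.Perm (Fin m) => σ ⟨0, hm⟩ = i),
        ∏ t : Fin m, φ (σ t) / ∑ l ∈ Finset.Ici t, φ (σ l))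
      = φ i / ∑ j, φ j ∧
    ∀ lam : Fin m → ℝ,
      (∑ σ ∈ Finset.univ.filter (fun σ : Equiv.Perm (Fin m) => σ ⟨0, hm⟩ = i),
          ∏ t : Fin m, Real.exp (lam (σ t)) / ∑ l ∈ Finset.Ici t, Real.exp (lam (σ l)))
        = Real.exp (lam i) / ∑ j, Real.exp (lam j) := by
  obtain ⟨n, rfl⟩ : ∃ n, m = n + 1 := ⟨m - 1, by omega⟩
  have h0 : (⟨0, hm⟩ : Fin (n+1)) = 0 := rfl
  rw [h0]
  exact ⟨stmt_13_main n φ hφ i,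
    fun lam => stmt_13_main n (fun j => Real.exp (lam j)) (fun j => Real.exp_pos _) i⟩
end

section
/- Let S and A be finite sets with |A| = m, T ≥ 1, d ≥ 1, and let λ : ℝ^d × S × A → ℝ be differentiable in its first argument at θ₀. Define the softmax (listwise ranking) policy π_θ(a|s) = exp(λ(θ,s,a)) / ∑_{a'∈A} exp(λ(θ,s,a')), and for each trajectory τ = ((s_1,a_1),…,(s_T,a_T)) ∈ (S×A)^T let p_θ(τ) = c(τ)·∏_{t=1}^{T} π_θ(a_t|s_t), where c(τ) = p₀(s_1)·∏_{t=1}^{T-1}P(s_{t+1}|s_t,a_t) ≥ 0 does not depend on θ. Then J(θ) = ∑_{τ∈(S×A)^T} p_θ(τ)·r(τ) is differentiable at θ₀ and ∇_θ J(θ₀) = ∑_{τ} p_{θ₀}(τ)·(∑_{t=1}^{T} ∇_θ[log π_θ(a_t|s_t)]|_{θ=θ₀})·r(τ), i.e. ∇_θ J(θ₀) = ∑_{τ} p_{θ₀}(τ)·(∑_{t=1}^{T} ∇_θ[λ(θ,s_t,a_t) − log ∑_{a'} e^{λ(θ,s_t,a')}]|_{θ=θ₀})·r(τ). -/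
open Finset

/-- Softmax (listwise ranking) policy built from relative action values. -/
noncomputable def softmaxPolicy {S A : Type*} [Fintype A] {d : ℕ}
    (lam : (Fin d → ℝ) → S → A → ℝ) (θ : Fin d → ℝ) (s : S) (a : A) : ℝ :=
  Real.exp (lam θ s a) / ∑ a' : A, Real.exp (lam θ s a')

/-- Listwise Policy Gradient Theorem: for the softmax policy
`π_θ(a|s) = e^{λ(θ,s,a)}/∑_{a'} e^{λ(θ,s,a')}` and trajectory probabilities
`p_θ(τ) = c(τ)·∏_t π_θ(a_t|s_t)`, the return `J(θ) = ∑_τ p_θ(τ)·r(τ)` is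
differentiable and its gradient is the expected sum over time of the gradient of
the log-softmax probabilities weighted by `r(τ)`. -/
theorem stmt_15 {S A : Type*} [Fintype S] [Fintype A] [Nonempty A]
    (T d : ℕ) (hT : 1 ≤ T) (hd : 1 ≤ d)
    (lam : (Fin d → ℝ) → S → A → ℝ) (θ₀ : Fin d → ℝ)
    (hdiff : ∀ s a, DifferentiableAt ℝ (fun θ => lam θ s a) θ₀)
    (c : (Fin T → S × A) → ℝ) (hc : ∀ τ, 0 ≤ c τ)
    (r : (Fin T → S × A) → ℝ) :
    DifferentiableAt ℝ
      (fun θ => ∑ τ : Fin T → S × A,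
        (c τ * ∏ t, softmaxPolicy lam θ (τ t).1 (τ t).2) * r τ) θ₀ ∧
    fderiv ℝ
      (fun θ => ∑ τ : Fin T → S × A,
        (c τ * ∏ t, softmaxPolicy lam θ (τ t).1 (τ t).2) * r τ) θ₀
      = ∑ τ : Fin T → S × A,
          ((c τ * ∏ t, softmaxPolicy lam θ₀ (τ t).1 (τ t).2) * r τ) •
            ∑ t : Fin T,
              fderiv ℝ (fun θ => Real.log (softmaxPolicy lam θ (τ t).1 (τ t).2)) θ₀ ∧
    fderiv ℝ
      (fun θ => ∑ τ : Fin T → S × A,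
        (c τ * ∏ t, softmaxPolicy lam θ (τ t).1 (τ t).2) * r τ) θ₀
      = ∑ τ : Fin T → S × A,
          ((c τ * ∏ t, softmaxPolicy lam θ₀ (τ t).1 (τ t).2) * r τ) •
            ∑ t : Fin T,
              fderiv ℝ (fun θ =>
                lam θ (τ t).1 (τ t).2 -
                  Real.log (∑ a' : A, Real.exp (lam θ (τ t).1 a'))) θ₀ := by
  classical
  -- positivity of denominator
  have hsum_pos : ∀ θ (s : S), 0 < ∑ a' : A, Real.exp (lam θ s a') := fun θ s =>
    Finset.sum_pos (fun a' _ => Real.exp_pos _) Finset.univ_nonempty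
  have hπpos : ∀ θ (s : S) (a : A), 0 < softmaxPolicy lam θ s a := fun θ s a =>
    div_pos (Real.exp_pos _) (hsum_pos θ s)
  have hπdiff : ∀ (s : S) (a : A),
      DifferentiableAt ℝ (fun θ => softmaxPolicy lam θ s a) θ₀ := by
    intro s a
    unfold softmaxPolicy
    have h1 : DifferentiableAt ℝ (fun θ => ∑ a' : A, Real.exp (lam θ s a')) θ₀ :=
      DifferentiableAt.fun_sum fun a' _ => (hdiff s a').exp
    simp only [div_eq_mul_inv]
    exact ((hdiff s a).exp).mul (h1.inv (ne_of_gt (hsum_pos θ₀ s)))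
  -- derivatives of the individual policies
  set D : S → A → (Fin d → ℝ) →L[ℝ] ℝ :=
    fun s a => fderiv ℝ (fun θ => softmaxPolicy lam θ s a) θ₀ with hD
  have hπ : ∀ (s : S) (a : A),
      HasFDerivAt (fun θ => softmaxPolicy lam θ s a) (D s a) θ₀ := fun s a =>
    (hπdiff s a).hasFDerivAt
  -- log-derivative
  have hlog : ∀ (s : S) (a : A),
      fderiv ℝ (fun θ => Real.log (softmaxPolicy lam θ s a)) θ₀
        = (softmaxPolicy lam θ₀ s a)⁻¹ • D s a := fun s a =>
    (((hπ s a).log (ne_of_gt (hπpos θ₀ s a)))).fderiv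
  -- derivative of each trajectory term
  have hterm : ∀ τ : Fin T → S × A,
      HasFDerivAt (fun θ => (c τ * ∏ t, softmaxPolicy lam θ (τ t).1 (τ t).2) * r τ)
        (((c τ * ∏ t, softmaxPolicy lam θ₀ (τ t).1 (τ t).2) * r τ) •
          ∑ t : Fin T, (softmaxPolicy lam θ₀ (τ t).1 (τ t).2)⁻¹ • D (τ t).1 (τ t).2) θ₀ := by
    intro τ
    have hprod : HasFDerivAt (fun θ => ∏ t, softmaxPolicy lam θ (τ t).1 (τ t).2)
        (∑ t : Fin T, (∏ u ∈ Finset.univ.erase t,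
            softmaxPolicy lam θ₀ (τ u).1 (τ u).2) • D (τ t).1 (τ t).2) θ₀ :=
      HasFDerivAt.finset_prod (fun t _ => hπ (τ t).1 (τ t).2)
    have h2 := (hprod.const_mul (c τ)).mul_const (r τ)
    refine h2.congr_fderiv ?_
    symm
    rw [Finset.smul_sum, Finset.smul_sum, Finset.smul_sum]
    refine Finset.sum_congr rfl fun t _ => ?_
    rw [smul_smul, smul_smul, smul_smul]
    congr 1
    have hne : softmaxPolicy lam θ₀ (τ t).1 (τ t).2 ≠ 0 := ne_of_gt (hπpos _ _ _)
    rw [← Finset.mul_prod_erase Finset.univ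
      (fun u => softmaxPolicy lam θ₀ (τ u).1 (τ u).2) (Finset.mem_univ t)]
    field_simp
  have hJ : HasFDerivAt
      (fun θ => ∑ τ : Fin T → S × A,
        (c τ * ∏ t, softmaxPolicy lam θ (τ t).1 (τ t).2) * r τ)
      (∑ τ : Fin T → S × A,
        ((c τ * ∏ t, softmaxPolicy lam θ₀ (τ t).1 (τ t).2) * r τ) •
          ∑ t : Fin T, (softmaxPolicy lam θ₀ (τ t).1 (τ t).2)⁻¹ • D (τ t).1 (τ t).2) θ₀ :=
    HasFDerivAt.fun_sum (fun τ _ => hterm τ)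
  have heq1 : fderiv ℝ
      (fun θ => ∑ τ : Fin T → S × A,
        (c τ * ∏ t, softmaxPolicy lam θ (τ t).1 (τ t).2) * r τ) θ₀
      = ∑ τ : Fin T → S × A,
          ((c τ * ∏ t, softmaxPolicy lam θ₀ (τ t).1 (τ t).2) * r τ) •
            ∑ t : Fin T,
              fderiv ℝ (fun θ => Real.log (softmaxPolicy lam θ (τ t).1 (τ t).2)) θ₀ := by
    rw [hJ.fderiv]
    refine Finset.sum_congr rfl fun τ _ => ?_
    congr 1
    exact Finset.sum_congr rfl fun t _ => (hlog (τ t).1 (τ t).2).symm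
  refine ⟨hJ.differentiableAt, heq1, ?_⟩
  rw [heq1]
  refine Finset.sum_congr rfl fun τ _ => ?_
  congr 1
  refine Finset.sum_congr rfl fun t _ => ?_
  congr 1
  funext θ
  unfold softmaxPolicy
  rw [Real.log_div (Real.exp_ne_zero _) (ne_of_gt (hsum_pos θ (τ t).1)), Real.log_exp]
end
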